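/- Let c, ħ, κ, m > 0 be real constants and W : ℝ → ℝ any function. Let φ : ℝ × ℝ² → ℂ be C² and A₀, A₁, A₂ : ℝ × ℝ² → ℝ be C¹, and set D₀f := (1/c)∂_t f − (i/(cħ)) A₀ f and D_j f := ∂_j f − (i/(cħ)) A_j f for j = 1, 2. Assume that at every point of ℝ × ℝ²: ħ²(D₀D₀φ − D₁D₁φ − D₂D₂φ) + m²c²φ + 2m W(2m|φ|²) φ = 0, κ((1/c)∂_t A₁ − ∂₁A₀) = −2ħ Im(conj(φ) D₂φ), and κ((1/c)∂_t A₂ − ∂₂A₀) = 2ħ Im(conj(φ) D₁φ). Then at every point of ℝ × ℝ²: ∂_t( (κ/c)(∂₁A₂ − ∂₂A₁) − (2ħ/c) Im(conj(φ) D₀φ) ) = 0. In particular, if the Gauss-law constraint (κ/c)(∂₁A₂ − ∂₂A₁) = (2ħ/c) Im(conj(φ) D₀φ) holds at time t = 0, it holds for all times. -/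

import Mathlib

noncomputable section

/-- Spacetime points `(t, x₁, x₂) ∈ ℝ × ℝ²`. -/
abbrev Spt := ℝ × ℝ × ℝ

/-- Partial derivative in the time variable. -/
def ptd {E : Type*} [NormedAddCommGroup E] [NormedSpace ℝ E] (f : Spt → E) (p : Spt) : E :=
  fderiv ℝ f p (1, 0, 0)

/-- Partial derivative in the first spatial variable. -/
def px1 {E : Type*} [NormedAddCommGroup E] [NormedSpace ℝ E] (f : Spt → E) (p : Spt) : E :=
  fderiv ℝ f p (0, 1, 0)

/-- Partial derivative in the second spatial variable. -/
def px2 {E : Type*} [NormedAddCommGroup E] [NormedSpace ℝ E] (f : Spt → E) (p : Spt) : E :=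
  fderiv ℝ f p (0, 0, 1)

/-- Covariant derivative `D₀ f = (1/c)∂_t f − (i/(c·hbar)) A₀ f`. -/
def D0 (c hbar : ℝ) (A₀ : Spt → ℝ) (f : Spt → ℂ) (p : Spt) : ℂ :=
  ((1 / c : ℝ) : ℂ) * ptd f p
    - Complex.I / ((c : ℂ) * (hbar : ℂ)) * ((A₀ p : ℝ) : ℂ) * f p

/-- Covariant derivative `D₁ f = ∂₁ f − (i/(c·hbar)) A₁ f`. -/
def Dsp1 (c hbar : ℝ) (A₁ : Spt → ℝ) (f : Spt → ℂ) (p : Spt) : ℂ :=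
  px1 f p - Complex.I / ((c : ℂ) * (hbar : ℂ)) * ((A₁ p : ℝ) : ℂ) * f p

/-- Covariant derivative `D₂ f = ∂₂ f − (i/(c·hbar)) A₂ f`. -/
def Dsp2 (c hbar : ℝ) (A₂ : Spt → ℝ) (f : Spt → ℂ) (p : Spt) : ℂ :=
  px2 f p - Complex.I / ((c : ℂ) * (hbar : ℂ)) * ((A₂ p : ℝ) : ℂ) * f p

namespace CSH

/-- abbreviation for the coupling coefficient -/
def β (c hbar : ℝ) : ℂ := Complex.I / ((c : ℂ) * (hbar : ℂ))

lemma conj_β (c hbar : ℝ) : (starRingEnd ℂ) (β c hbar) = - β c hbar := by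
  simp [β, map_div₀]; ring

section pd
variable {f g : Spt → ℂ} {p v : Spt}

lemma pd_mul (hf : DifferentiableAt ℝ f p) (hg : DifferentiableAt ℝ g p) :
    fderiv ℝ (fun q => f q * g q) p v = fderiv ℝ f p v * g p + f p * fderiv ℝ g p v := by
  rw [fderiv_fun_mul hf hg]; simp; ring

lemma pd_conj (hf : DifferentiableAt ℝ f p) :
    fderiv ℝ (fun q => (starRingEnd ℂ) (f q)) p v = (starRingEnd ℂ) (fderiv ℝ f p v) := by
  have h : HasFDerivAt (fun q => (starRingEnd ℂ) (f q))
      ((Complex.conjCLE.toContinuousLinearMap).comp (fderiv ℝ f p)) p :=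
    Complex.conjCLE.toContinuousLinearMap.hasFDerivAt.comp p hf.hasFDerivAt
  rw [h.fderiv]; rfl

lemma pd_im (hf : DifferentiableAt ℝ f p) :
    fderiv ℝ (fun q => (f q).im) p v = (fderiv ℝ f p v).im := by
  have h : HasFDerivAt (fun q => (f q).im) (Complex.imCLM.comp (fderiv ℝ f p)) p :=
    Complex.imCLM.hasFDerivAt.comp p hf.hasFDerivAt
  rw [h.fderiv]; rfl

lemma pd_im_conj_mul (hf : DifferentiableAt ℝ f p) (hg : DifferentiableAt ℝ g p) :
    fderiv ℝ (fun q => ((starRingEnd ℂ) (f q) * g q).im) p v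
      = ((starRingEnd ℂ) (fderiv ℝ f p v) * g p
          + (starRingEnd ℂ) (f p) * fderiv ℝ g p v).im := by
  have hcf : DifferentiableAt ℝ (fun q => (starRingEnd ℂ) (f q)) p :=
    Complex.conjCLE.differentiable.differentiableAt.comp p hf
  rw [pd_im (f := fun q => (starRingEnd ℂ) (f q) * g q) (hcf.mul hg), pd_mul hcf hg, pd_conj hf]

end pd

section smooth
variable {n : ℕ∞} {f : Spt → ℂ} {A : Spt → ℝ} {c hbar : ℝ}

lemma contDiff_pd {E : Type*} [NormedAddCommGroup E] [NormedSpace ℝ E]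
    {f : Spt → E} (hf : ContDiff ℝ 2 f) (v : Spt) :
    ContDiff ℝ 1 (fun q => fderiv ℝ f q v) :=
  (hf.fderiv_right (le_refl _)).clm_apply contDiff_const

lemma continuous_pd {E : Type*} [NormedAddCommGroup E] [NormedSpace ℝ E]
    {f : Spt → E} (hf : ContDiff ℝ 1 f) (v : Spt) :
    Continuous (fun q => fderiv ℝ f q v) :=
  (hf.continuous_fderiv one_ne_zero).clm_apply continuous_const

lemma contDiff_D0 (hA : ContDiff ℝ 1 A) (hf : ContDiff ℝ 2 f) :
    ContDiff ℝ 1 (D0 c hbar A f) := by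
  unfold D0 ptd
  exact (contDiff_const.mul (contDiff_pd hf _)).sub
    ((contDiff_const.mul (Complex.ofRealCLM.contDiff.comp hA)).mul (hf.of_le (by norm_num)))

lemma contDiff_Dsp1 (hA : ContDiff ℝ 1 A) (hf : ContDiff ℝ 2 f) :
    ContDiff ℝ 1 (Dsp1 c hbar A f) := by
  unfold Dsp1 px1
  exact (contDiff_pd hf _).sub
    ((contDiff_const.mul (Complex.ofRealCLM.contDiff.comp hA)).mul (hf.of_le (by norm_num)))

lemma contDiff_Dsp2 (hA : ContDiff ℝ 1 A) (hf : ContDiff ℝ 2 f) :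
    ContDiff ℝ 1 (Dsp2 c hbar A f) := by
  unfold Dsp2 px2
  exact (contDiff_pd hf _).sub
    ((contDiff_const.mul (Complex.ofRealCLM.contDiff.comp hA)).mul (hf.of_le (by norm_num)))

lemma contDiff_im_conj_mul {g : Spt → ℂ} (hf : ContDiff ℝ 1 f) (hg : ContDiff ℝ 1 g) :
    ContDiff ℝ 1 (fun q => ((starRingEnd ℂ) (f q) * g q).im) :=
  Complex.imCLM.contDiff.comp ((Complex.conjCLE.contDiff.comp hf).mul hg)

end smooth


section key
variable {c hbar : ℝ} {A : Spt → ℝ} {f : Spt → ℂ}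

lemma ptd_inv (hc : c ≠ 0) (A : Spt → ℝ) (f : Spt → ℂ) (p : Spt) :
    ptd f p = (c : ℂ) * D0 c hbar A f p + (c : ℂ) * β c hbar * ((A p : ℝ) : ℂ) * f p := by
  have hcc : (c : ℂ) ≠ 0 := Complex.ofReal_ne_zero.mpr hc
  rw [D0, β]
  push_cast
  field_simp
  ring

lemma px1_inv (A : Spt → ℝ) (f : Spt → ℂ) (p : Spt) :
    px1 f p = Dsp1 c hbar A f p + β c hbar * ((A p : ℝ) : ℂ) * f p := by
  rw [Dsp1, β]; ring

lemma px2_inv (A : Spt → ℝ) (f : Spt → ℂ) (p : Spt) :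
    px2 f p = Dsp2 c hbar A f p + β c hbar * ((A p : ℝ) : ℂ) * f p := by
  rw [Dsp2, β]; ring

variable {A₀ A₁ A₂ : Spt → ℝ} {φ : Spt → ℂ}

lemma ptd_rho0 (hc : c ≠ 0) (hφ : ContDiff ℝ 2 φ) (hA₀ : ContDiff ℝ 1 A₀) (p : Spt) :
    ptd (fun q => ((starRingEnd ℂ) (φ q) * D0 c hbar A₀ φ q).im) p
      = c * ((starRingEnd ℂ) (φ p) * D0 c hbar A₀ (D0 c hbar A₀ φ) p).im := by
  have hφ1 : ContDiff ℝ 1 φ := hφ.of_le (by norm_num)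
  have hD : ContDiff ℝ 1 (D0 c hbar A₀ φ) := contDiff_D0 hA₀ hφ
  unfold ptd
  rw [pd_im_conj_mul (hφ1.differentiable one_ne_zero p) (hD.differentiable one_ne_zero p)]
  have h1 : fderiv ℝ φ p (1,0,0) = ptd φ p := rfl
  have h2 : fderiv ℝ (D0 c hbar A₀ φ) p (1,0,0) = ptd (D0 c hbar A₀ φ) p := rfl
  rw [h1, h2, ptd_inv hc A₀ φ p, ptd_inv hc A₀ (D0 c hbar A₀ φ) p]
  have harg : (starRingEnd ℂ) ((c : ℂ) * D0 c hbar A₀ φ p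
        + (c : ℂ) * β c hbar * ((A₀ p : ℝ) : ℂ) * φ p) * D0 c hbar A₀ φ p
      + (starRingEnd ℂ) (φ p) * ((c : ℂ) * D0 c hbar A₀ (D0 c hbar A₀ φ) p
        + (c : ℂ) * β c hbar * ((A₀ p : ℝ) : ℂ) * D0 c hbar A₀ φ p)
      = (c : ℂ) * ((starRingEnd ℂ) (D0 c hbar A₀ φ p) * D0 c hbar A₀ φ p)
        + (c : ℂ) * ((starRingEnd ℂ) (φ p) * D0 c hbar A₀ (D0 c hbar A₀ φ) p) := by
    simp only [map_mul, map_add, Complex.conj_ofReal, conj_β]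
    ring
  rw [harg, ← Complex.normSq_eq_conj_mul_self]
  simp [Complex.add_im, Complex.mul_im]

lemma px1_rho1 (hφ : ContDiff ℝ 2 φ) (hA₁ : ContDiff ℝ 1 A₁) (p : Spt) :
    px1 (fun q => ((starRingEnd ℂ) (φ q) * Dsp1 c hbar A₁ φ q).im) p
      = ((starRingEnd ℂ) (φ p) * Dsp1 c hbar A₁ (Dsp1 c hbar A₁ φ) p).im := by
  have hφ1 : ContDiff ℝ 1 φ := hφ.of_le (by norm_num)
  have hD : ContDiff ℝ 1 (Dsp1 c hbar A₁ φ) := contDiff_Dsp1 hA₁ hφ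
  unfold px1
  rw [pd_im_conj_mul (hφ1.differentiable one_ne_zero p) (hD.differentiable one_ne_zero p)]
  have h1 : fderiv ℝ φ p (0,1,0) = px1 φ p := rfl
  have h2 : fderiv ℝ (Dsp1 c hbar A₁ φ) p (0,1,0) = px1 (Dsp1 c hbar A₁ φ) p := rfl
  rw [h1, h2, px1_inv (c := c) (hbar := hbar) A₁ φ p,
    px1_inv (c := c) (hbar := hbar) A₁ (Dsp1 c hbar A₁ φ) p]
  have harg : (starRingEnd ℂ) (Dsp1 c hbar A₁ φ p
        + β c hbar * ((A₁ p : ℝ) : ℂ) * φ p) * Dsp1 c hbar A₁ φ p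
      + (starRingEnd ℂ) (φ p) * (Dsp1 c hbar A₁ (Dsp1 c hbar A₁ φ) p
        + β c hbar * ((A₁ p : ℝ) : ℂ) * Dsp1 c hbar A₁ φ p)
      = ((starRingEnd ℂ) (Dsp1 c hbar A₁ φ p) * Dsp1 c hbar A₁ φ p)
        + (starRingEnd ℂ) (φ p) * Dsp1 c hbar A₁ (Dsp1 c hbar A₁ φ) p := by
    simp only [map_mul, map_add, Complex.conj_ofReal, conj_β]
    ring
  rw [harg, ← Complex.normSq_eq_conj_mul_self]
  simp [Complex.add_im]

lemma px2_rho2 (hφ : ContDiff ℝ 2 φ) (hA₂ : ContDiff ℝ 1 A₂) (p : Spt) :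
    px2 (fun q => ((starRingEnd ℂ) (φ q) * Dsp2 c hbar A₂ φ q).im) p
      = ((starRingEnd ℂ) (φ p) * Dsp2 c hbar A₂ (Dsp2 c hbar A₂ φ) p).im := by
  have hφ1 : ContDiff ℝ 1 φ := hφ.of_le (by norm_num)
  have hD : ContDiff ℝ 1 (Dsp2 c hbar A₂ φ) := contDiff_Dsp2 hA₂ hφ
  unfold px2
  rw [pd_im_conj_mul (hφ1.differentiable one_ne_zero p) (hD.differentiable one_ne_zero p)]
  have h1 : fderiv ℝ φ p (0,0,1) = px2 φ p := rfl
  have h2 : fderiv ℝ (Dsp2 c hbar A₂ φ) p (0,0,1) = px2 (Dsp2 c hbar A₂ φ) p := rfl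
  rw [h1, h2, px2_inv (c := c) (hbar := hbar) A₂ φ p,
    px2_inv (c := c) (hbar := hbar) A₂ (Dsp2 c hbar A₂ φ) p]
  have harg : (starRingEnd ℂ) (Dsp2 c hbar A₂ φ p
        + β c hbar * ((A₂ p : ℝ) : ℂ) * φ p) * Dsp2 c hbar A₂ φ p
      + (starRingEnd ℂ) (φ p) * (Dsp2 c hbar A₂ (Dsp2 c hbar A₂ φ) p
        + β c hbar * ((A₂ p : ℝ) : ℂ) * Dsp2 c hbar A₂ φ p)
      = ((starRingEnd ℂ) (Dsp2 c hbar A₂ φ p) * Dsp2 c hbar A₂ φ p)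
        + (starRingEnd ℂ) (φ p) * Dsp2 c hbar A₂ (Dsp2 c hbar A₂ φ) p := by
    simp only [map_mul, map_add, Complex.conj_ofReal, conj_β]
    ring
  rw [harg, ← Complex.normSq_eq_conj_mul_self]
  simp [Complex.add_im]

end key


section combine
variable {c hbar m : ℝ} {W : ℝ → ℝ} {A₀ A₁ A₂ : Spt → ℝ} {φ : Spt → ℂ}

lemma key_identity (hc : c ≠ 0) (hbar0 : hbar ≠ 0)
    (hφ : ContDiff ℝ 2 φ) (hA₀ : ContDiff ℝ 1 A₀)
    (hA₁ : ContDiff ℝ 1 A₁) (hA₂ : ContDiff ℝ 1 A₂)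
    (heq : ∀ p : Spt,
      ((hbar ^ 2 : ℝ) : ℂ) *
          (D0 c hbar A₀ (D0 c hbar A₀ φ) p
            - Dsp1 c hbar A₁ (Dsp1 c hbar A₁ φ) p
            - Dsp2 c hbar A₂ (Dsp2 c hbar A₂ φ) p)
        + ((m ^ 2 * c ^ 2 : ℝ) : ℂ) * φ p
        + ((2 * m : ℝ) : ℂ) * ((W (2 * m * Complex.normSq (φ p)) : ℝ) : ℂ) * φ p = 0)
    (p : Spt) :
    ptd (fun q => ((starRingEnd ℂ) (φ q) * D0 c hbar A₀ φ q).im) p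
      = c * (px1 (fun q => ((starRingEnd ℂ) (φ q) * Dsp1 c hbar A₁ φ q).im) p
          + px2 (fun q => ((starRingEnd ℂ) (φ q) * Dsp2 c hbar A₂ φ q).im) p) := by
  rw [ptd_rho0 hc hφ hA₀ p, px1_rho1 hφ hA₁ p, px2_rho2 hφ hA₂ p]
  have hb : ((hbar : ℝ) : ℂ) ≠ 0 := Complex.ofReal_ne_zero.mpr hbar0
  set s : ℝ := -(m ^ 2 * c ^ 2 + 2 * m * W (2 * m * Complex.normSq (φ p))) / hbar ^ 2 with hs
  have hX : (starRingEnd ℂ) (φ p) * D0 c hbar A₀ (D0 c hbar A₀ φ) p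
      = (starRingEnd ℂ) (φ p) * Dsp1 c hbar A₁ (Dsp1 c hbar A₁ φ) p
        + (starRingEnd ℂ) (φ p) * Dsp2 c hbar A₂ (Dsp2 c hbar A₂ φ) p
        + (s : ℂ) * ((starRingEnd ℂ) (φ p) * φ p) := by
    have h := heq p
    push_cast at h
    rw [hs]
    push_cast
    field_simp
    linear_combination ((starRingEnd ℂ) (φ p)) * h
  rw [hX, ← Complex.normSq_eq_conj_mul_self]
  simp [Complex.add_im, Complex.mul_im]

end combine


section analysis
open MeasureTheory intervalIntegral

variable {E : Type*} [NormedAddCommGroup E] [NormedSpace ℝ E]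

lemma hasDerivAt_line_t {f : Spt → E} {t x y : ℝ} (hf : DifferentiableAt ℝ f (t, x, y)) :
    HasDerivAt (fun s => f (s, x, y)) (ptd f (t, x, y)) t :=
  hf.hasFDerivAt.comp_hasDerivAt t
    (HasDerivAt.prodMk (hasDerivAt_id t) (HasDerivAt.prodMk (hasDerivAt_const t x) (hasDerivAt_const t y)))

lemma hasDerivAt_line_x1 {f : Spt → E} {t x y : ℝ} (hf : DifferentiableAt ℝ f (t, x, y)) :
    HasDerivAt (fun u => f (t, u, y)) (px1 f (t, x, y)) x :=
  hf.hasFDerivAt.comp_hasDerivAt x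
    (HasDerivAt.prodMk (hasDerivAt_const x t) (HasDerivAt.prodMk (hasDerivAt_id x) (hasDerivAt_const x y)))

lemma hasDerivAt_line_x2 {f : Spt → E} {t x y : ℝ} (hf : DifferentiableAt ℝ f (t, x, y)) :
    HasDerivAt (fun v => f (t, x, v)) (px2 f (t, x, y)) y :=
  hf.hasFDerivAt.comp_hasDerivAt y
    (HasDerivAt.prodMk (hasDerivAt_const y t) (HasDerivAt.prodMk (hasDerivAt_const y x) (hasDerivAt_id y)))

/-- FTC along the x₁ direction. -/
lemma ftc_x1 {f : Spt → ℝ} (hf : ContDiff ℝ 1 f) (t x x' y : ℝ) :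
    ∫ u in x..x', px1 f (t, u, y) = f (t, x', y) - f (t, x, y) := by
  refine integral_eq_sub_of_hasDerivAt (fun u _ => hasDerivAt_line_x1 (hf.differentiable one_ne_zero _)) ?_
  exact ((continuous_pd hf _).comp
    (continuous_const.prodMk (continuous_id.prodMk continuous_const))).intervalIntegrable _ _

/-- FTC along the x₂ direction. -/
lemma ftc_x2 {f : Spt → ℝ} (hf : ContDiff ℝ 1 f) (t x y y' : ℝ) :
    ∫ v in y..y', px2 f (t, x, v) = f (t, x, y') - f (t, x, y) := by
  refine integral_eq_sub_of_hasDerivAt (fun v _ => hasDerivAt_line_x2 (hf.differentiable one_ne_zero _)) ?_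
  exact ((continuous_pd hf _).comp
    (continuous_const.prodMk (continuous_const.prodMk continuous_id))).intervalIntegrable _ _

/-- Differentiation under the interval integral for a jointly continuous family with jointly
continuous derivative. -/
lemma hasDerivAt_param_integral {F F' : ℝ → ℝ → ℝ} {a b : ℝ} (x₀ : ℝ)
    (hF : Continuous fun q : ℝ × ℝ => F q.1 q.2)
    (hF' : Continuous fun q : ℝ × ℝ => F' q.1 q.2)
    (hd : ∀ x t, HasDerivAt (fun z => F z t) (F' x t) x) :
    HasDerivAt (fun x => ∫ t in a..b, F x t) (∫ t in a..b, F' x₀ t) x₀ := by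
  have hK : IsCompact (Metric.closedBall x₀ 1 ×ˢ Set.uIcc a b) :=
    (isCompact_closedBall _ _).prod isCompact_uIcc
  obtain ⟨M, hM⟩ := hK.exists_bound_of_continuousOn hF'.continuousOn
  refine (intervalIntegral.hasDerivAt_integral_of_dominated_loc_of_deriv_le
    (F := F) (F' := F') (bound := fun _ => M) (Metric.ball_mem_nhds x₀ one_pos) ?_ ?_ ?_ ?_ ?_ ?_).2
  · exact Filter.Eventually.of_forall fun x =>
      ((hF.comp (continuous_const.prodMk continuous_id)).aestronglyMeasurable)
  · exact ((hF.comp (continuous_const.prodMk continuous_id)).intervalIntegrable _ _)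
  · exact ((hF'.comp (continuous_const.prodMk continuous_id)).aestronglyMeasurable)
  · refine Filter.Eventually.of_forall fun s hs x hx => ?_
    have := hM (x, s) ⟨Metric.ball_subset_closedBall hx, Set.uIoc_subset_uIcc hs⟩
    simpa using this
  · exact intervalIntegrable_const
  · exact Filter.Eventually.of_forall fun s _ x _ => hd x s

end analysis


section doubleint
open MeasureTheory intervalIntegral

/-- Continuity in a parameter of a double interval integral of a jointly continuous function. -/
lemma continuous_param_double {G : ℝ → ℝ → ℝ → ℝ} {x x' y y' : ℝ}
    (hG : Continuous fun q : ℝ × ℝ × ℝ => G q.1 q.2.1 q.2.2) :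
    Continuous fun s => ∫ v in y..y', ∫ u in x..x', G s u v := by
  have inner : Continuous fun q : ℝ × ℝ => ∫ u in x..x', G q.1 u q.2 := by
    apply intervalIntegral.continuous_parametric_intervalIntegral_of_continuous'
      (f := fun (q : ℝ × ℝ) (u : ℝ) => G q.1 u q.2)
    exact hG.comp ((continuous_fst.comp continuous_fst).prodMk
      (continuous_snd.prodMk (continuous_snd.comp continuous_fst)))
  apply intervalIntegral.continuous_parametric_intervalIntegral_of_continuous'
    (f := fun (s : ℝ) (v : ℝ) => ∫ u in x..x', G s u v)
  exact inner

/-- Averaging bound for a double interval integral. -/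
lemma double_small {g : ℝ → ℝ → ℝ} (hg : Continuous fun q : ℝ × ℝ => g q.1 q.2)
    {x y d ε g₀ : ℝ} (hd : 0 ≤ d) (hε : 0 ≤ ε)
    (hB : ∀ u v, u ∈ Set.Icc x (x + d) → v ∈ Set.Icc y (y + d) → |g u v - g₀| ≤ ε) :
    |(∫ v in y..y + d, ∫ u in x..x + d, g u v) - d ^ 2 * g₀| ≤ ε * d ^ 2 := by
  have hcont_inner : Continuous fun v => ∫ u in x..x + d, g u v := by
    apply intervalIntegral.continuous_parametric_intervalIntegral_of_continuous'
      (f := fun (v : ℝ) (u : ℝ) => g u v)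
    exact hg.comp (continuous_snd.prodMk continuous_fst)
  have key : (∫ v in y..y + d, ∫ u in x..x + d, g u v) - d ^ 2 * g₀
      = ∫ v in y..y + d, ((∫ u in x..x + d, g u v) - d * g₀) := by
    rw [intervalIntegral.integral_sub (hcont_inner.intervalIntegrable _ _) intervalIntegrable_const,
      intervalIntegral.integral_const]
    simp
    ring
  rw [key]
  have hbound : ∀ v ∈ Set.uIoc y (y + d), |(∫ u in x..x + d, g u v) - d * g₀| ≤ ε * d := by
    intro v hv
    have hv' : v ∈ Set.Icc y (y + d) := by
      rcases hv with ⟨h1, h2⟩; exact ⟨le_of_lt (by simpa [min_eq_left (by linarith : y ≤ y + d)] using h1),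
        by simpa [max_eq_right (by linarith : y ≤ y + d)] using h2⟩
    have hgv : Continuous fun u : ℝ => g u v := hg.comp (continuous_id.prodMk continuous_const)
    have key2 : (∫ u in x..x + d, g u v) - d * g₀ = ∫ u in x..x + d, (g u v - g₀) := by
      rw [intervalIntegral.integral_sub (hgv.intervalIntegrable _ _)
        intervalIntegrable_const, intervalIntegral.integral_const]
      simp
    rw [key2]
    have := intervalIntegral.norm_integral_le_of_norm_le_const
      (f := fun u => g u v - g₀) (C := ε) (a := x) (b := x + d) ?_
    · calc |∫ u in x..x + d, (g u v - g₀)| ≤ ε * |x + d - x| := this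
        _ = ε * d := by rw [show x + d - x = d by ring, abs_of_nonneg hd]
    · intro u hu
      have hu' : u ∈ Set.Icc x (x + d) := by
        rcases hu with ⟨h1, h2⟩; exact ⟨le_of_lt (by simpa [min_eq_left (by linarith : x ≤ x + d)] using h1),
          by simpa [max_eq_right (by linarith : x ≤ x + d)] using h2⟩
      simpa [Real.norm_eq_abs] using hB u v hu' hv'
  have := intervalIntegral.norm_integral_le_of_norm_le_const
    (f := fun v => (∫ u in x..x + d, g u v) - d * g₀) (C := ε * d) (a := y) (b := y + d)
    (fun v hv => by simpa [Real.norm_eq_abs] using hbound v hv)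
  calc |∫ v in y..y + d, ((∫ u in x..x + d, g u v) - d * g₀)| ≤ ε * d * |y + d - y| := this
    _ = ε * d ^ 2 := by rw [show y + d - y = d by ring, abs_of_nonneg hd]; ring

end doubleint


section eps
open MeasureTheory

lemma point_small {h : Spt → ℝ} (hh : Continuous h) (t₀ x y : ℝ) {ε : ℝ} (hε : 0 < ε) :
    ∃ δ > 0, ∀ u v, |u - x| ≤ δ → |v - y| ≤ δ → |h (t₀, u, v) - h (t₀, x, y)| ≤ ε := by
  obtain ⟨δ, hδpos, hδ⟩ := Metric.continuousAt_iff.mp (hh.continuousAt (x := (t₀, x, y))) ε hε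
  refine ⟨δ / 2, by linarith, fun u v hu hv => ?_⟩
  have hd : dist ((t₀, u, v) : Spt) (t₀, x, y) < δ := by
    simp only [Prod.dist_eq, Real.dist_eq]
    apply max_lt (by simpa using hδpos)
    exact max_lt (lt_of_le_of_lt hu (by linarith)) (lt_of_le_of_lt hv (by linarith))
  simpa [Real.dist_eq] using le_of_lt (hδ hd)

lemma tube_small {h : Spt → ℝ} (hh : Continuous h) (t x y : ℝ) {ε : ℝ} (hε : 0 < ε) :
    ∃ δ > 0, ∀ s ∈ Set.uIcc (0:ℝ) t, ∀ u v, |u - x| ≤ δ → |v - y| ≤ δ →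
      |h (s, u, v) - h (s, x, y)| ≤ ε := by
  have hK : IsCompact ((Set.uIcc (0:ℝ) t) ×ˢ (Metric.closedBall x 1 ×ˢ Metric.closedBall y 1)) :=
    isCompact_uIcc.prod ((isCompact_closedBall _ _).prod (isCompact_closedBall _ _))
  have hUC := hK.uniformContinuousOn_of_continuous hh.continuousOn
  obtain ⟨δ, hδpos, hδ⟩ := Metric.uniformContinuousOn_iff.mp hUC ε hε
  refine ⟨min (δ / 2) 1, by positivity, fun s hs u v hu hv => ?_⟩
  have hu1 : |u - x| ≤ 1 := le_trans hu (min_le_right _ _)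
  have hv1 : |v - y| ≤ 1 := le_trans hv (min_le_right _ _)
  have hu2 : |u - x| ≤ δ / 2 := le_trans hu (min_le_left _ _)
  have hv2 : |v - y| ≤ δ / 2 := le_trans hv (min_le_left _ _)
  have hmem1 : ((s, u, v) : Spt) ∈ (Set.uIcc (0:ℝ) t) ×ˢ (Metric.closedBall x 1 ×ˢ Metric.closedBall y 1) :=
    ⟨hs, by simpa [Metric.mem_closedBall, Real.dist_eq] using hu1,
      by simpa [Metric.mem_closedBall, Real.dist_eq] using hv1⟩
  have hmem2 : ((s, x, y) : Spt) ∈ (Set.uIcc (0:ℝ) t) ×ˢ (Metric.closedBall x 1 ×ˢ Metric.closedBall y 1) :=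
    ⟨hs, by simp [Metric.mem_closedBall], by simp [Metric.mem_closedBall]⟩
  have hd : dist ((s, u, v) : Spt) (s, x, y) < δ := by
    simp only [Prod.dist_eq, Real.dist_eq]
    apply max_lt (by simpa using hδpos)
    exact max_lt (lt_of_le_of_lt hu2 (by linarith)) (lt_of_le_of_lt hv2 (by linarith))
  simpa [Real.dist_eq] using le_of_lt (hδ _ hmem1 _ hmem2 hd)

end eps


section curl
open MeasureTheory intervalIntegral

variable {c : ℝ} {A₀ A₁ A₂ b₁ b₂ : Spt → ℝ}

/-- continuity of a slice function `v ↦ f (τ, a, v)` -/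
lemma cont_slice2 {f : Spt → ℝ} (hf : Continuous f) (τ a : ℝ) :
    Continuous fun v : ℝ => f (τ, a, v) :=
  hf.comp (continuous_const.prodMk (continuous_const.prodMk continuous_id))

lemma cont_slice1 {f : Spt → ℝ} (hf : Continuous f) (τ b : ℝ) :
    Continuous fun u : ℝ => f (τ, u, b) :=
  hf.comp (continuous_const.prodMk (continuous_id.prodMk continuous_const))

lemma cont_slicet {f : Spt → ℝ} (hf : Continuous f) (a b : ℝ) :
    Continuous fun s : ℝ => f (s, a, b) :=
  hf.comp (continuous_id.prodMk (continuous_const.prodMk continuous_const))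

lemma curl_master (hc : c ≠ 0)
    (hA₀ : ContDiff ℝ 1 A₀) (hA₁ : ContDiff ℝ 1 A₁) (hA₂ : ContDiff ℝ 1 A₂)
    (hb₁ : ContDiff ℝ 1 b₁) (hb₂ : ContDiff ℝ 1 b₂)
    (h1 : ∀ q, ptd A₁ q = c * (px1 A₀ q + b₁ q))
    (h2 : ∀ q, ptd A₂ q = c * (px2 A₀ q + b₂ q))
    (t x y x' y' : ℝ) :
    ((∫ v in y..y', ∫ u in x..x', px1 A₂ (t, u, v))
        - (∫ u in x..x', ∫ v in y..y', px2 A₁ (t, u, v)))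
      - ((∫ v in y..y', ∫ u in x..x', px1 A₂ (0, u, v))
        - (∫ u in x..x', ∫ v in y..y', px2 A₁ (0, u, v)))
      = c * ∫ s in (0:ℝ)..t,
          ((∫ v in y..y', ∫ u in x..x', px1 b₂ (s, u, v))
            - (∫ u in x..x', ∫ v in y..y', px2 b₁ (s, u, v))) := by
  have cA₁ : Continuous A₁ := hA₁.continuous
  have cA₂ : Continuous A₂ := hA₂.continuous
  have cb₁ : Continuous b₁ := hb₁.continuous
  have cb₂ : Continuous b₂ := hb₂.continuous
  have cptdA₁ : Continuous (fun q => ptd A₁ q) := continuous_pd hA₁ _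
  have cptdA₂ : Continuous (fun q => ptd A₂ q) := continuous_pd hA₂ _
  -- the circulation function and its time derivative
  set E : ℝ → ℝ := fun τ => (∫ v in y..y', (A₂ (τ, x', v) - A₂ (τ, x, v)))
      - (∫ u in x..x', (A₁ (τ, u, y') - A₁ (τ, u, y))) with hEdef
  set Eb : ℝ → ℝ := fun τ => (∫ v in y..y', (b₂ (τ, x', v) - b₂ (τ, x, v)))
      - (∫ u in x..x', (b₁ (τ, u, y') - b₁ (τ, u, y))) with hEbdef
  have hEb_cont : Continuous Eb := by
    rw [hEbdef]
    apply Continuous.sub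
    · apply intervalIntegral.continuous_parametric_intervalIntegral_of_continuous'
        (f := fun (τ : ℝ) (v : ℝ) => b₂ (τ, x', v) - b₂ (τ, x, v))
      exact (cb₂.comp (continuous_fst.prodMk (continuous_const.prodMk continuous_snd))).sub
        (cb₂.comp (continuous_fst.prodMk (continuous_const.prodMk continuous_snd)))
    · apply intervalIntegral.continuous_parametric_intervalIntegral_of_continuous'
        (f := fun (τ : ℝ) (u : ℝ) => b₁ (τ, u, y') - b₁ (τ, u, y))
      exact (cb₁.comp (continuous_fst.prodMk (continuous_snd.prodMk continuous_const))).sub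
        (cb₁.comp (continuous_fst.prodMk (continuous_snd.prodMk continuous_const)))
  have hderiv : ∀ τ, HasDerivAt E (c * Eb τ) τ := by
    intro τ
    have hd2 : HasDerivAt (fun σ => ∫ v in y..y', (A₂ (σ, x', v) - A₂ (σ, x, v)))
        (∫ v in y..y', (ptd A₂ (τ, x', v) - ptd A₂ (τ, x, v))) τ := by
      apply hasDerivAt_param_integral τ
      · exact (cA₂.comp (continuous_fst.prodMk (continuous_const.prodMk continuous_snd))).sub
          (cA₂.comp (continuous_fst.prodMk (continuous_const.prodMk continuous_snd)))
      · exact (cptdA₂.comp (continuous_fst.prodMk (continuous_const.prodMk continuous_snd))).sub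
          (cptdA₂.comp (continuous_fst.prodMk (continuous_const.prodMk continuous_snd)))
      · intro σ v
        exact (hasDerivAt_line_t (hA₂.differentiable one_ne_zero _)).sub
          (hasDerivAt_line_t (hA₂.differentiable one_ne_zero _))
    have hd1 : HasDerivAt (fun σ => ∫ u in x..x', (A₁ (σ, u, y') - A₁ (σ, u, y)))
        (∫ u in x..x', (ptd A₁ (τ, u, y') - ptd A₁ (τ, u, y))) τ := by
      apply hasDerivAt_param_integral τ
      · exact (cA₁.comp (continuous_fst.prodMk (continuous_snd.prodMk continuous_const))).sub
          (cA₁.comp (continuous_fst.prodMk (continuous_snd.prodMk continuous_const)))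
      · exact (cptdA₁.comp (continuous_fst.prodMk (continuous_snd.prodMk continuous_const))).sub
          (cptdA₁.comp (continuous_fst.prodMk (continuous_snd.prodMk continuous_const)))
      · intro σ u
        exact (hasDerivAt_line_t (hA₁.differentiable one_ne_zero _)).sub
          (hasDerivAt_line_t (hA₁.differentiable one_ne_zero _))
    have hV2 : (∫ v in y..y', (ptd A₂ (τ, x', v) - ptd A₂ (τ, x, v)))
        = c * ((A₀ (τ, x', y') - A₀ (τ, x', y)) - (A₀ (τ, x, y') - A₀ (τ, x, y)))
          + c * (∫ v in y..y', (b₂ (τ, x', v) - b₂ (τ, x, v))) := by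
      have hEE : Set.EqOn (fun v => ptd A₂ (τ, x', v) - ptd A₂ (τ, x, v))
          (fun v => c * (px2 A₀ (τ, x', v) - px2 A₀ (τ, x, v))
            + c * (b₂ (τ, x', v) - b₂ (τ, x, v))) (Set.uIcc y y') := by
        intro v _; simp only; rw [h2, h2]; ring
      rw [intervalIntegral.integral_congr hEE]
      have i1 : IntervalIntegrable (fun v => c * (px2 A₀ (τ, x', v) - px2 A₀ (τ, x, v))) volume y y' :=
        (continuous_const.mul ((cont_slice2 (continuous_pd hA₀ _) τ x').sub
          (cont_slice2 (continuous_pd hA₀ _) τ x))).intervalIntegrable _ _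
      have i2 : IntervalIntegrable (fun v => c * (b₂ (τ, x', v) - b₂ (τ, x, v))) volume y y' :=
        (continuous_const.mul ((cont_slice2 cb₂ τ x').sub (cont_slice2 cb₂ τ x))).intervalIntegrable _ _
      have j1 : IntervalIntegrable (fun v => px2 A₀ (τ, x', v)) volume y y' :=
        (cont_slice2 (continuous_pd hA₀ _) τ x').intervalIntegrable _ _
      have j2 : IntervalIntegrable (fun v => px2 A₀ (τ, x, v)) volume y y' :=
        (cont_slice2 (continuous_pd hA₀ _) τ x).intervalIntegrable _ _
      rw [intervalIntegral.integral_add i1 i2, intervalIntegral.integral_const_mul,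
        intervalIntegral.integral_const_mul, intervalIntegral.integral_sub j1 j2]
      rw [ftc_x2 hA₀ τ x' y y', ftc_x2 hA₀ τ x y y']
    have hV1 : (∫ u in x..x', (ptd A₁ (τ, u, y') - ptd A₁ (τ, u, y)))
        = c * ((A₀ (τ, x', y') - A₀ (τ, x, y')) - (A₀ (τ, x', y) - A₀ (τ, x, y)))
          + c * (∫ u in x..x', (b₁ (τ, u, y') - b₁ (τ, u, y))) := by
      have hEE : Set.EqOn (fun u => ptd A₁ (τ, u, y') - ptd A₁ (τ, u, y))
          (fun u => c * (px1 A₀ (τ, u, y') - px1 A₀ (τ, u, y))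
            + c * (b₁ (τ, u, y') - b₁ (τ, u, y))) (Set.uIcc x x') := by
        intro u _; simp only; rw [h1, h1]; ring
      rw [intervalIntegral.integral_congr hEE]
      have i1 : IntervalIntegrable (fun u => c * (px1 A₀ (τ, u, y') - px1 A₀ (τ, u, y))) volume x x' :=
        (continuous_const.mul ((cont_slice1 (continuous_pd hA₀ _) τ y').sub
          (cont_slice1 (continuous_pd hA₀ _) τ y))).intervalIntegrable _ _
      have i2 : IntervalIntegrable (fun u => c * (b₁ (τ, u, y') - b₁ (τ, u, y))) volume x x' :=
        (continuous_const.mul ((cont_slice1 cb₁ τ y').sub (cont_slice1 cb₁ τ y))).intervalIntegrable _ _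
      have j1 : IntervalIntegrable (fun u => px1 A₀ (τ, u, y')) volume x x' :=
        (cont_slice1 (continuous_pd hA₀ _) τ y').intervalIntegrable _ _
      have j2 : IntervalIntegrable (fun u => px1 A₀ (τ, u, y)) volume x x' :=
        (cont_slice1 (continuous_pd hA₀ _) τ y).intervalIntegrable _ _
      rw [intervalIntegral.integral_add i1 i2, intervalIntegral.integral_const_mul,
        intervalIntegral.integral_const_mul, intervalIntegral.integral_sub j1 j2]
      rw [ftc_x1 hA₀ τ x x' y', ftc_x1 hA₀ τ x x' y]
    have := hd2.sub hd1
    have heq : (∫ v in y..y', (ptd A₂ (τ, x', v) - ptd A₂ (τ, x, v)))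
        - (∫ u in x..x', (ptd A₁ (τ, u, y') - ptd A₁ (τ, u, y))) = c * Eb τ := by
      rw [hV2, hV1, hEbdef]; simp only; ring
    rw [heq] at this
    exact this
  -- FTC in time
  have hftc : E t - E 0 = ∫ s in (0:ℝ)..t, c * Eb s := by
    rw [intervalIntegral.integral_eq_sub_of_hasDerivAt (fun s _ => hderiv s)
      ((continuous_const.mul hEb_cont).intervalIntegrable _ _)]
  -- rewrite E via double integrals
  have hE_eq : ∀ τ, E τ = (∫ v in y..y', ∫ u in x..x', px1 A₂ (τ, u, v))
      - (∫ u in x..x', ∫ v in y..y', px2 A₁ (τ, u, v)) := by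
    intro τ
    rw [hEdef]
    simp only
    congr 1
    · apply intervalIntegral.integral_congr
      intro v _
      exact (ftc_x1 hA₂ τ x x' v).symm
    · apply intervalIntegral.integral_congr
      intro u _
      exact (ftc_x2 hA₁ τ u y y').symm
  have hEb_eq : ∀ τ, Eb τ = (∫ v in y..y', ∫ u in x..x', px1 b₂ (τ, u, v))
      - (∫ u in x..x', ∫ v in y..y', px2 b₁ (τ, u, v)) := by
    intro τ
    rw [hEbdef]
    simp only
    congr 1
    · apply intervalIntegral.integral_congr
      intro v _
      exact (ftc_x1 hb₂ τ x x' v).symm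
    · apply intervalIntegral.integral_congr
      intro u _
      exact (ftc_x2 hb₁ τ u y y').symm
  calc ((∫ v in y..y', ∫ u in x..x', px1 A₂ (t, u, v))
        - (∫ u in x..x', ∫ v in y..y', px2 A₁ (t, u, v)))
      - ((∫ v in y..y', ∫ u in x..x', px1 A₂ (0, u, v))
        - (∫ u in x..x', ∫ v in y..y', px2 A₁ (0, u, v)))
      = E t - E 0 := by rw [hE_eq t, hE_eq 0]
    _ = ∫ s in (0:ℝ)..t, c * Eb s := hftc
    _ = c * ∫ s in (0:ℝ)..t, Eb s := intervalIntegral.integral_const_mul _ _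
    _ = c * ∫ s in (0:ℝ)..t, ((∫ v in y..y', ∫ u in x..x', px1 b₂ (s, u, v))
            - (∫ u in x..x', ∫ v in y..y', px2 b₁ (s, u, v))) := by
        congr 1
        apply intervalIntegral.integral_congr
        intro s _
        exact hEb_eq s

end curl


section curl2
open MeasureTheory intervalIntegral

variable {c : ℝ} {A₀ A₁ A₂ b₁ b₂ : Spt → ℝ}

lemma curl_evolution (hc : c ≠ 0)
    (hA₀ : ContDiff ℝ 1 A₀) (hA₁ : ContDiff ℝ 1 A₁) (hA₂ : ContDiff ℝ 1 A₂)
    (hb₁ : ContDiff ℝ 1 b₁) (hb₂ : ContDiff ℝ 1 b₂)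
    (h1 : ∀ q, ptd A₁ q = c * (px1 A₀ q + b₁ q))
    (h2 : ∀ q, ptd A₂ q = c * (px2 A₀ q + b₂ q))
    (t x y : ℝ) :
    (px1 A₂ (t, x, y) - px2 A₁ (t, x, y)) - (px1 A₂ (0, x, y) - px2 A₁ (0, x, y))
      = c * ∫ s in (0:ℝ)..t, (px1 b₂ (s, x, y) - px2 b₁ (s, x, y)) := by
  have cg2 : Continuous (px1 A₂) := continuous_pd hA₂ _
  have cf1 : Continuous (px2 A₁) := continuous_pd hA₁ _
  have cG2 : Continuous (px1 b₂) := continuous_pd hb₂ _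
  have cF1 : Continuous (px2 b₁) := continuous_pd hb₁ _
  set L : ℝ := (px1 A₂ (t, x, y) - px2 A₁ (t, x, y)) - (px1 A₂ (0, x, y) - px2 A₁ (0, x, y))
    with hL
  set R : ℝ := c * ∫ s in (0:ℝ)..t, (px1 b₂ (s, x, y) - px2 b₁ (s, x, y)) with hR
  have key : ∀ ε > (0:ℝ), |L - R| ≤ ε * (4 + 2 * |c| * |t|) := by
    intro ε hε
    obtain ⟨δ₁, hp₁, hq₁⟩ := point_small cg2 t x y hε
    obtain ⟨δ₂, hp₂, hq₂⟩ := point_small cg2 0 x y hε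
    obtain ⟨δ₃, hp₃, hq₃⟩ := point_small cf1 t x y hε
    obtain ⟨δ₄, hp₄, hq₄⟩ := point_small cf1 0 x y hε
    obtain ⟨δ₅, hp₅, hq₅⟩ := tube_small cG2 t x y hε
    obtain ⟨δ₆, hp₆, hq₆⟩ := tube_small cF1 t x y hε
    set d := min δ₁ (min δ₂ (min δ₃ (min δ₄ (min δ₅ δ₆)))) with hd
    have hdpos : 0 < d := lt_min hp₁ (lt_min hp₂ (lt_min hp₃ (lt_min hp₄ (lt_min hp₅ hp₆))))
    have hdδ₁ : d ≤ δ₁ := min_le_left _ _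
    have hdδ₂ : d ≤ δ₂ := le_trans (min_le_right _ _) (min_le_left _ _)
    have hdδ₃ : d ≤ δ₃ := le_trans (min_le_right _ _) (le_trans (min_le_right _ _) (min_le_left _ _))
    have hdδ₄ : d ≤ δ₄ := le_trans (min_le_right _ _) (le_trans (min_le_right _ _)
      (le_trans (min_le_right _ _) (min_le_left _ _)))
    have hdδ₅ : d ≤ δ₅ := le_trans (min_le_right _ _) (le_trans (min_le_right _ _)
      (le_trans (min_le_right _ _) (le_trans (min_le_right _ _) (min_le_left _ _))))
    have hdδ₆ : d ≤ δ₆ := le_trans (min_le_right _ _) (le_trans (min_le_right _ _)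
      (le_trans (min_le_right _ _) (le_trans (min_le_right _ _) (min_le_right _ _))))
    have habsu : ∀ a w : ℝ, w ∈ Set.Icc a (a + d) → |w - a| ≤ d := by
      intro a w hw
      exact abs_le.mpr ⟨by linarith [hw.1], by linarith [hw.2]⟩
    have master := curl_master hc hA₀ hA₁ hA₂ hb₁ hb₂ h1 h2 t x y (x + d) (y + d)
    -- four spatial averaging bounds
    have B1 : |(∫ v in y..y + d, ∫ u in x..x + d, px1 A₂ (t, u, v)) - d ^ 2 * px1 A₂ (t, x, y)|
        ≤ ε * d ^ 2 := by
      refine double_small (g := fun u v => px1 A₂ (t, u, v))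
        (cg2.comp (continuous_const.prodMk (continuous_fst.prodMk continuous_snd)))
        hdpos.le hε.le ?_
      intro u v hu hv
      exact hq₁ u v (le_trans (habsu x u hu) hdδ₁) (le_trans (habsu y v hv) hdδ₁)
    have B2 : |(∫ u in x..x + d, ∫ v in y..y + d, px2 A₁ (t, u, v)) - d ^ 2 * px2 A₁ (t, x, y)|
        ≤ ε * d ^ 2 := by
      refine double_small (g := fun a b => px2 A₁ (t, b, a)) (x := y) (y := x)
        (cf1.comp (continuous_const.prodMk (continuous_snd.prodMk continuous_fst)))
        hdpos.le hε.le ?_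
      intro u v hu hv
      exact hq₃ v u (le_trans (habsu x v hv) hdδ₃) (le_trans (habsu y u hu) hdδ₃)
    have B3 : |(∫ v in y..y + d, ∫ u in x..x + d, px1 A₂ (0, u, v)) - d ^ 2 * px1 A₂ (0, x, y)|
        ≤ ε * d ^ 2 := by
      refine double_small (g := fun u v => px1 A₂ (0, u, v))
        (cg2.comp (continuous_const.prodMk (continuous_fst.prodMk continuous_snd)))
        hdpos.le hε.le ?_
      intro u v hu hv
      exact hq₂ u v (le_trans (habsu x u hu) hdδ₂) (le_trans (habsu y v hv) hdδ₂)
    have B4 : |(∫ u in x..x + d, ∫ v in y..y + d, px2 A₁ (0, u, v)) - d ^ 2 * px2 A₁ (0, x, y)|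
        ≤ ε * d ^ 2 := by
      refine double_small (g := fun a b => px2 A₁ (0, b, a)) (x := y) (y := x)
        (cf1.comp (continuous_const.prodMk (continuous_snd.prodMk continuous_fst)))
        hdpos.le hε.le ?_
      intro u v hu hv
      exact hq₄ v u (le_trans (habsu x v hv) hdδ₄) (le_trans (habsu y u hu) hdδ₄)
    -- time-uniform bound on the b-part
    have Bs : ∀ s ∈ Set.uIoc (0:ℝ) t,
        |((∫ v in y..y + d, ∫ u in x..x + d, px1 b₂ (s, u, v))
            - (∫ u in x..x + d, ∫ v in y..y + d, px2 b₁ (s, u, v)))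
          - d ^ 2 * (px1 b₂ (s, x, y) - px2 b₁ (s, x, y))| ≤ 2 * (ε * d ^ 2) := by
      intro s hs
      have hsIcc : s ∈ Set.uIcc (0:ℝ) t := Set.uIoc_subset_uIcc hs
      have C1 : |(∫ v in y..y + d, ∫ u in x..x + d, px1 b₂ (s, u, v))
          - d ^ 2 * px1 b₂ (s, x, y)| ≤ ε * d ^ 2 := by
        refine double_small (g := fun u v => px1 b₂ (s, u, v))
          (cG2.comp (continuous_const.prodMk (continuous_fst.prodMk continuous_snd)))
          hdpos.le hε.le ?_
        intro u v hu hv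
        exact hq₅ s hsIcc u v (le_trans (habsu x u hu) hdδ₅) (le_trans (habsu y v hv) hdδ₅)
      have C2 : |(∫ u in x..x + d, ∫ v in y..y + d, px2 b₁ (s, u, v))
          - d ^ 2 * px2 b₁ (s, x, y)| ≤ ε * d ^ 2 := by
        refine double_small (g := fun a b => px2 b₁ (s, b, a)) (x := y) (y := x)
          (cF1.comp (continuous_const.prodMk (continuous_snd.prodMk continuous_fst)))
          hdpos.le hε.le ?_
        intro u v hu hv
        exact hq₆ s hsIcc v u (le_trans (habsu x v hv) hdδ₆) (le_trans (habsu y u hu) hdδ₆)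
      calc |((∫ v in y..y + d, ∫ u in x..x + d, px1 b₂ (s, u, v))
            - (∫ u in x..x + d, ∫ v in y..y + d, px2 b₁ (s, u, v)))
          - d ^ 2 * (px1 b₂ (s, x, y) - px2 b₁ (s, x, y))|
          = |((∫ v in y..y + d, ∫ u in x..x + d, px1 b₂ (s, u, v)) - d ^ 2 * px1 b₂ (s, x, y))
            - ((∫ u in x..x + d, ∫ v in y..y + d, px2 b₁ (s, u, v)) - d ^ 2 * px2 b₁ (s, x, y))| := by
            congr 1; ring
        _ ≤ |(∫ v in y..y + d, ∫ u in x..x + d, px1 b₂ (s, u, v)) - d ^ 2 * px1 b₂ (s, x, y)|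
            + |(∫ u in x..x + d, ∫ v in y..y + d, px2 b₁ (s, u, v)) - d ^ 2 * px2 b₁ (s, x, y)| :=
            abs_sub _ _
        _ ≤ 2 * (ε * d ^ 2) := by linarith
    -- continuity of the parametric double integrals
    have hcontQ2 : Continuous fun s => ∫ v in y..y + d, ∫ u in x..x + d, px1 b₂ (s, u, v) :=
      continuous_param_double (cG2.comp (continuous_fst.prodMk
        (continuous_fst.comp continuous_snd |>.prodMk (continuous_snd.comp continuous_snd))))
    have hcontQ1 : Continuous fun s => ∫ u in x..x + d, ∫ v in y..y + d, px2 b₁ (s, u, v) :=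
      continuous_param_double (G := fun s a b => px2 b₁ (s, b, a)) (x := y) (x' := y + d)
        (y := x) (y' := x + d)
        (cF1.comp (continuous_fst.prodMk
          (continuous_snd.comp continuous_snd |>.prodMk (continuous_fst.comp continuous_snd))))
    have hcontPt : Continuous fun s => px1 b₂ (s, x, y) - px2 b₁ (s, x, y) :=
      (cont_slicet cG2 x y).sub (cont_slicet cF1 x y)
    -- compare the time integrals
    have Btime : |(∫ s in (0:ℝ)..t, ((∫ v in y..y + d, ∫ u in x..x + d, px1 b₂ (s, u, v))
            - (∫ u in x..x + d, ∫ v in y..y + d, px2 b₁ (s, u, v))))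
          - d ^ 2 * ∫ s in (0:ℝ)..t, (px1 b₂ (s, x, y) - px2 b₁ (s, x, y))|
        ≤ 2 * (ε * d ^ 2) * |t| := by
      have hrw : (∫ s in (0:ℝ)..t, ((∫ v in y..y + d, ∫ u in x..x + d, px1 b₂ (s, u, v))
            - (∫ u in x..x + d, ∫ v in y..y + d, px2 b₁ (s, u, v))))
          - d ^ 2 * ∫ s in (0:ℝ)..t, (px1 b₂ (s, x, y) - px2 b₁ (s, x, y))
          = ∫ s in (0:ℝ)..t, (((∫ v in y..y + d, ∫ u in x..x + d, px1 b₂ (s, u, v))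
            - (∫ u in x..x + d, ∫ v in y..y + d, px2 b₁ (s, u, v)))
            - d ^ 2 * (px1 b₂ (s, x, y) - px2 b₁ (s, x, y))) := by
        rw [intervalIntegral.integral_sub
          (f := fun s => (∫ v in y..y + d, ∫ u in x..x + d, px1 b₂ (s, u, v))
            - ∫ u in x..x + d, ∫ v in y..y + d, px2 b₁ (s, u, v))
          (g := fun s => d ^ 2 * (px1 b₂ (s, x, y) - px2 b₁ (s, x, y)))
          ((hcontQ2.sub hcontQ1).intervalIntegrable _ _)
          ((continuous_const.mul hcontPt).intervalIntegrable _ _),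
          intervalIntegral.integral_const_mul]
      rw [hrw]
      have := intervalIntegral.norm_integral_le_of_norm_le_const (C := 2 * (ε * d ^ 2))
        (a := (0:ℝ)) (b := t)
        (f := fun s => (((∫ v in y..y + d, ∫ u in x..x + d, px1 b₂ (s, u, v))
            - (∫ u in x..x + d, ∫ v in y..y + d, px2 b₁ (s, u, v)))
            - d ^ 2 * (px1 b₂ (s, x, y) - px2 b₁ (s, x, y))))
        (fun s hs => by simpa [Real.norm_eq_abs] using Bs s hs)
      simpa [Real.norm_eq_abs] using this
    -- assemble
    have hmaster_rhs : d ^ 2 * R = c * (d ^ 2 * ∫ s in (0:ℝ)..t, (px1 b₂ (s, x, y) - px2 b₁ (s, x, y))) := by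
      rw [hR]; ring
    have hfinal : |d ^ 2 * L - d ^ 2 * R| ≤ ε * d ^ 2 * (4 + 2 * |c| * |t|) := by
      have e1 : d ^ 2 * L - d ^ 2 * R
          = ((d ^ 2 * px1 A₂ (t, x, y) - (∫ v in y..y + d, ∫ u in x..x + d, px1 A₂ (t, u, v)))
            - (d ^ 2 * px2 A₁ (t, x, y) - (∫ u in x..x + d, ∫ v in y..y + d, px2 A₁ (t, u, v)))
            - (d ^ 2 * px1 A₂ (0, x, y) - (∫ v in y..y + d, ∫ u in x..x + d, px1 A₂ (0, u, v)))
            + (d ^ 2 * px2 A₁ (0, x, y) - (∫ u in x..x + d, ∫ v in y..y + d, px2 A₁ (0, u, v))))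
            + c * ((∫ s in (0:ℝ)..t, ((∫ v in y..y + d, ∫ u in x..x + d, px1 b₂ (s, u, v))
            - (∫ u in x..x + d, ∫ v in y..y + d, px2 b₁ (s, u, v))))
            - d ^ 2 * ∫ s in (0:ℝ)..t, (px1 b₂ (s, x, y) - px2 b₁ (s, x, y))) := by
        rw [hL, hR]
        linear_combination master
      rw [e1]
      have habs1 : |(d ^ 2 * px1 A₂ (t, x, y) - (∫ v in y..y + d, ∫ u in x..x + d, px1 A₂ (t, u, v)))
            - (d ^ 2 * px2 A₁ (t, x, y) - (∫ u in x..x + d, ∫ v in y..y + d, px2 A₁ (t, u, v)))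
            - (d ^ 2 * px1 A₂ (0, x, y) - (∫ v in y..y + d, ∫ u in x..x + d, px1 A₂ (0, u, v)))
            + (d ^ 2 * px2 A₁ (0, x, y) - (∫ u in x..x + d, ∫ v in y..y + d, px2 A₁ (0, u, v)))|
          ≤ 4 * (ε * d ^ 2) := by
        have r1 := abs_sub_comm ((∫ v in y..y + d, ∫ u in x..x + d, px1 A₂ (t, u, v))) (d ^ 2 * px1 A₂ (t, x, y))
        have r2 := abs_sub_comm ((∫ u in x..x + d, ∫ v in y..y + d, px2 A₁ (t, u, v))) (d ^ 2 * px2 A₁ (t, x, y))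
        have r3 := abs_sub_comm ((∫ v in y..y + d, ∫ u in x..x + d, px1 A₂ (0, u, v))) (d ^ 2 * px1 A₂ (0, x, y))
        have r4 := abs_sub_comm ((∫ u in x..x + d, ∫ v in y..y + d, px2 A₁ (0, u, v))) (d ^ 2 * px2 A₁ (0, x, y))
        have t1 := abs_add_le ((d ^ 2 * px1 A₂ (t, x, y) - (∫ v in y..y + d, ∫ u in x..x + d, px1 A₂ (t, u, v)))
            - (d ^ 2 * px2 A₁ (t, x, y) - (∫ u in x..x + d, ∫ v in y..y + d, px2 A₁ (t, u, v)))
            - (d ^ 2 * px1 A₂ (0, x, y) - (∫ v in y..y + d, ∫ u in x..x + d, px1 A₂ (0, u, v))))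
          ((d ^ 2 * px2 A₁ (0, x, y) - (∫ u in x..x + d, ∫ v in y..y + d, px2 A₁ (0, u, v))))
        have t2 := abs_sub ((d ^ 2 * px1 A₂ (t, x, y) - (∫ v in y..y + d, ∫ u in x..x + d, px1 A₂ (t, u, v)))
            - (d ^ 2 * px2 A₁ (t, x, y) - (∫ u in x..x + d, ∫ v in y..y + d, px2 A₁ (t, u, v))))
          ((d ^ 2 * px1 A₂ (0, x, y) - (∫ v in y..y + d, ∫ u in x..x + d, px1 A₂ (0, u, v))))
        have t3 := abs_sub ((d ^ 2 * px1 A₂ (t, x, y) - (∫ v in y..y + d, ∫ u in x..x + d, px1 A₂ (t, u, v))))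
          ((d ^ 2 * px2 A₁ (t, x, y) - (∫ u in x..x + d, ∫ v in y..y + d, px2 A₁ (t, u, v))))
        linarith
      have habs2 : |c * ((∫ s in (0:ℝ)..t, ((∫ v in y..y + d, ∫ u in x..x + d, px1 b₂ (s, u, v))
            - (∫ u in x..x + d, ∫ v in y..y + d, px2 b₁ (s, u, v))))
            - d ^ 2 * ∫ s in (0:ℝ)..t, (px1 b₂ (s, x, y) - px2 b₁ (s, x, y)))|
          ≤ |c| * (2 * (ε * d ^ 2) * |t|) := by
        rw [abs_mul]
        exact mul_le_mul_of_nonneg_left Btime (abs_nonneg c)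
      calc |_ + _| ≤ _ := abs_add_le _ _
        _ ≤ 4 * (ε * d ^ 2) + |c| * (2 * (ε * d ^ 2) * |t|) := by linarith
        _ = ε * d ^ 2 * (4 + 2 * |c| * |t|) := by ring
    have : d ^ 2 * |L - R| ≤ d ^ 2 * (ε * (4 + 2 * |c| * |t|)) := by
      have h1' : |d ^ 2 * (L - R)| = d ^ 2 * |L - R| := by
        rw [abs_mul, abs_of_nonneg (by positivity : (0:ℝ) ≤ d ^ 2)]
      have h2' : |d ^ 2 * (L - R)| ≤ ε * d ^ 2 * (4 + 2 * |c| * |t|) := by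
        rw [mul_sub]; exact hfinal
      rw [h1'] at h2'
      linarith
    exact le_of_mul_le_mul_left (by linarith) (by positivity : (0:ℝ) < d ^ 2)
  -- conclude equality from the family of bounds
  by_contra hne
  have hpos : 0 < |L - R| := abs_pos.mpr (sub_ne_zero.mpr hne)
  set C : ℝ := 4 + 2 * |c| * |t| with hC
  have hCpos : 0 < C := by positivity
  have := key (|L - R| / (2 * C)) (by positivity)
  have : |L - R| ≤ |L - R| / 2 := by
    calc |L - R| ≤ |L - R| / (2 * C) * C := this
      _ = |L - R| / 2 := by field_simp
  linarith
end curl2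


section final
open MeasureTheory intervalIntegral

lemma constancy (c hbar κ m : ℝ)
    (hc : 0 < c) (hhbar : 0 < hbar) (hκ : 0 < κ)
    (W : ℝ → ℝ) (φ : Spt → ℂ) (A₀ A₁ A₂ : Spt → ℝ)
    (hφ : ContDiff ℝ 2 φ) (hA₀ : ContDiff ℝ 1 A₀)
    (hA₁ : ContDiff ℝ 1 A₁) (hA₂ : ContDiff ℝ 1 A₂)
    (heq : ∀ p : Spt,
      ((hbar ^ 2 : ℝ) : ℂ) *
          (D0 c hbar A₀ (D0 c hbar A₀ φ) p
            - Dsp1 c hbar A₁ (Dsp1 c hbar A₁ φ) p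
            - Dsp2 c hbar A₂ (Dsp2 c hbar A₂ φ) p)
        + ((m ^ 2 * c ^ 2 : ℝ) : ℂ) * φ p
        + ((2 * m : ℝ) : ℂ) * ((W (2 * m * Complex.normSq (φ p)) : ℝ) : ℂ) * φ p = 0)
    (hg1 : ∀ p : Spt,
      κ * ((1 / c) * ptd A₁ p - px1 A₀ p)
        = -(2 * hbar * ((starRingEnd ℂ) (φ p) * Dsp2 c hbar A₂ φ p).im))
    (hg2 : ∀ p : Spt,
      κ * ((1 / c) * ptd A₂ p - px2 A₀ p)
        = 2 * hbar * ((starRingEnd ℂ) (φ p) * Dsp1 c hbar A₁ φ p).im)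
    (t x y : ℝ) :
    κ / c * (px1 A₂ (t, x, y) - px2 A₁ (t, x, y))
        - 2 * hbar / c * ((starRingEnd ℂ) (φ (t, x, y)) * D0 c hbar A₀ φ (t, x, y)).im
      = κ / c * (px1 A₂ (0, x, y) - px2 A₁ (0, x, y))
        - 2 * hbar / c * ((starRingEnd ℂ) (φ (0, x, y)) * D0 c hbar A₀ φ (0, x, y)).im := by
  have hc' : c ≠ 0 := ne_of_gt hc
  have hh' : hbar ≠ 0 := ne_of_gt hhbar
  have hκ' : κ ≠ 0 := ne_of_gt hκ
  set ρ₀ : Spt → ℝ := fun q => ((starRingEnd ℂ) (φ q) * D0 c hbar A₀ φ q).im with hρ₀def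
  set ρ₁ : Spt → ℝ := fun q => ((starRingEnd ℂ) (φ q) * Dsp1 c hbar A₁ φ q).im with hρ₁def
  set ρ₂ : Spt → ℝ := fun q => ((starRingEnd ℂ) (φ q) * Dsp2 c hbar A₂ φ q).im with hρ₂def
  have hφ1 : ContDiff ℝ 1 φ := hφ.of_le (by norm_num)
  have hρ₀C : ContDiff ℝ 1 ρ₀ := contDiff_im_conj_mul hφ1 (contDiff_D0 hA₀ hφ)
  have hρ₁C : ContDiff ℝ 1 ρ₁ := contDiff_im_conj_mul hφ1 (contDiff_Dsp1 hA₁ hφ)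
  have hρ₂C : ContDiff ℝ 1 ρ₂ := contDiff_im_conj_mul hφ1 (contDiff_Dsp2 hA₂ hφ)
  set b₁ : Spt → ℝ := fun q => -(2 * hbar / κ * ρ₂ q) with hb₁def
  set b₂ : Spt → ℝ := fun q => 2 * hbar / κ * ρ₁ q with hb₂def
  have hb₁C : ContDiff ℝ 1 b₁ := (contDiff_const.mul hρ₂C).neg
  have hb₂C : ContDiff ℝ 1 b₂ := contDiff_const.mul hρ₁C
  have h1 : ∀ q, ptd A₁ q = c * (px1 A₀ q + b₁ q) := by
    intro q
    have := hg1 q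
    rw [hb₁def]
    simp only [hρ₂def]
    field_simp at this ⊢
    linarith
  have h2 : ∀ q, ptd A₂ q = c * (px2 A₀ q + b₂ q) := by
    intro q
    have := hg2 q
    rw [hb₂def]
    simp only [hρ₁def]
    field_simp at this ⊢
    linarith
  have hkey : ∀ p, ptd ρ₀ p = c * (px1 ρ₁ p + px2 ρ₂ p) := by
    intro p
    rw [hρ₀def, hρ₁def, hρ₂def]
    exact key_identity hc' hh' hφ hA₀ hA₁ hA₂ heq p
  have hpx1b₂ : ∀ q, px1 b₂ q = 2 * hbar / κ * px1 ρ₁ q := by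
    intro q
    rw [hb₂def]
    show fderiv ℝ (fun p => 2 * hbar / κ * ρ₁ p) q (0,1,0) = _
    rw [fderiv_const_mul (hρ₁C.differentiable one_ne_zero q)]
    rfl
  have hpx2b₁ : ∀ q, px2 b₁ q = -(2 * hbar / κ * px2 ρ₂ q) := by
    intro q
    rw [hb₁def]
    show fderiv ℝ (fun p => -(2 * hbar / κ * ρ₂ p)) q (0,0,1) = _
    rw [fderiv_fun_neg, fderiv_const_mul (hρ₂C.differentiable one_ne_zero q)]
    rfl
  have curl := curl_evolution hc' hA₀ hA₁ hA₂ hb₁C hb₂C h1 h2 t x y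
  -- FTC for ρ₀ in time
  have hFTC : ∫ s in (0:ℝ)..t, ptd ρ₀ (s, x, y) = ρ₀ (t, x, y) - ρ₀ (0, x, y) := by
    apply intervalIntegral.integral_eq_sub_of_hasDerivAt
    · exact fun s _ => hasDerivAt_line_t (hρ₀C.differentiable one_ne_zero _)
    · exact ((cont_slicet (continuous_pd hρ₀C _) x y).intervalIntegrable _ _)
  -- rewrite the curl integrand
  have hcong : Set.EqOn (fun s => px1 b₂ (s, x, y) - px2 b₁ (s, x, y))
      (fun s => 2 * hbar / (κ * c) * ptd ρ₀ (s, x, y)) (Set.uIcc (0:ℝ) t) := by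
    intro s _
    simp only
    rw [hpx1b₂, hpx2b₁, hkey]
    field_simp
    ring
  rw [intervalIntegral.integral_congr hcong, intervalIntegral.integral_const_mul, hFTC] at curl
  have hgoal : κ / c * (px1 A₂ (t, x, y) - px2 A₁ (t, x, y)) - 2 * hbar / c * ρ₀ (t, x, y)
      = κ / c * (px1 A₂ (0, x, y) - px2 A₁ (0, x, y)) - 2 * hbar / c * ρ₀ (0, x, y) := by
    have curlκ : κ * ((px1 A₂ (t, x, y) - px2 A₁ (t, x, y))
          - (px1 A₂ (0, x, y) - px2 A₁ (0, x, y)))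
        = 2 * hbar * (ρ₀ (t, x, y) - ρ₀ (0, x, y)) := by
      rw [curl]
      field_simp
    field_simp
    linear_combination curlκ
  exact hgoal

end final

end CSH

/-- Propagation of the Chern–Simons Gauss-law constraint:
the scalar field equation together with the two gauge evolution equations imply
`∂_t((κ/c)(∂₁A₂ − ∂₂A₁) − (2hbar/c) Im(conj(φ) D₀φ)) = 0` everywhere; in particular,
if the Gauss-law constraint holds at time `t = 0`, it holds for all times. -/
theorem gauss_law_propagation (c hbar κ m : ℝ)
    (hc : 0 < c) (hhbar : 0 < hbar) (hκ : 0 < κ) (hm : 0 < m)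
    (W : ℝ → ℝ) (φ : Spt → ℂ) (A₀ A₁ A₂ : Spt → ℝ)
    (hφ : ContDiff ℝ 2 φ) (hA₀ : ContDiff ℝ 1 A₀)
    (hA₁ : ContDiff ℝ 1 A₁) (hA₂ : ContDiff ℝ 1 A₂)
    (heq : ∀ p : Spt,
      ((hbar ^ 2 : ℝ) : ℂ) *
          (D0 c hbar A₀ (D0 c hbar A₀ φ) p
            - Dsp1 c hbar A₁ (Dsp1 c hbar A₁ φ) p
            - Dsp2 c hbar A₂ (Dsp2 c hbar A₂ φ) p)
        + ((m ^ 2 * c ^ 2 : ℝ) : ℂ) * φ p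
        + ((2 * m : ℝ) : ℂ) * ((W (2 * m * Complex.normSq (φ p)) : ℝ) : ℂ) * φ p = 0)
    (hg1 : ∀ p : Spt,
      κ * ((1 / c) * ptd A₁ p - px1 A₀ p)
        = -(2 * hbar * ((starRingEnd ℂ) (φ p) * Dsp2 c hbar A₂ φ p).im))
    (hg2 : ∀ p : Spt,
      κ * ((1 / c) * ptd A₂ p - px2 A₀ p)
        = 2 * hbar * ((starRingEnd ℂ) (φ p) * Dsp1 c hbar A₁ φ p).im) :
    (∀ p : Spt,
      ptd (fun q => κ / c * (px1 A₂ q - px2 A₁ q)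
            - 2 * hbar / c * ((starRingEnd ℂ) (φ q) * D0 c hbar A₀ φ q).im) p = 0)
    ∧
    ((∀ x₁ x₂ : ℝ,
        κ / c * (px1 A₂ (0, x₁, x₂) - px2 A₁ (0, x₁, x₂))
          = 2 * hbar / c *
              ((starRingEnd ℂ) (φ (0, x₁, x₂)) * D0 c hbar A₀ φ (0, x₁, x₂)).im) →
      ∀ p : Spt,
        κ / c * (px1 A₂ p - px2 A₁ p)
          = 2 * hbar / c * ((starRingEnd ℂ) (φ p) * D0 c hbar A₀ φ p).im) := by
  have hconst := CSH.constancy c hbar κ m hc hhbar hκ W φ A₀ A₁ A₂ hφ hA₀ hA₁ hA₂ heq hg1 hg2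
  constructor
  · rintro ⟨t, x, y⟩
    set F : Spt → ℝ := fun q => κ / c * (px1 A₂ q - px2 A₁ q)
      - 2 * hbar / c * ((starRingEnd ℂ) (φ q) * D0 c hbar A₀ φ q).im with hF
    by_cases hdiff : DifferentiableAt ℝ F (t, x, y)
    · have hline : HasDerivAt (fun s => F (s, x, y)) (ptd F (t, x, y)) t :=
        CSH.hasDerivAt_line_t hdiff
      have hconst' : (fun s => F (s, x, y)) = fun _ => F (0, x, y) := by
        funext s
        have := hconst s x y
        simp only [hF]
        linarith
      rw [hconst'] at hline
      exact hline.unique (hasDerivAt_const _ _)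
    · show ptd F (t, x, y) = 0
      unfold ptd
      rw [fderiv_zero_of_not_differentiableAt hdiff]
      simp
  · rintro h0 ⟨t, x, y⟩
    have h1 := hconst t x y
    have h2 := h0 x y
    linarith

end
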